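/- Fix g > 1, ω > 1, γ ≥ 1, η ∈ (0,1]. For μ > 1 define V_A(μ) := η·μ + (1−η)·γ, V_{A|β}(μ) := V_A(μ) − g·η·(μ²−1)/(g·μ + (g−1)·ω), and the mutual information I_AB(μ) := (1/2)·log₂( V_A(μ)/V_{A|β}(μ) ). Then I_AB(μ) − (1/2)·log₂( g·η·μ / (g·γ·(1−η) + η·ω·(g−1)) ) tends to 0 as μ → ∞. -/

import Mathlib

open Real Filter

/-- The DR mutual information `I_AB(μ)` approaches
`(1/2)·log₂(gημ/(gγ(1−η)+ηω(g−1)))` as `μ → ∞`. -/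
theorem mutual_information_asymptotic_DR (g ω γ η : ℝ)
    (hg : 1 < g) (hω : 1 < ω) (hγ : 1 ≤ γ) (hη : η ∈ Set.Ioc (0 : ℝ) 1) :
    Filter.Tendsto
      (fun μ : ℝ =>
        (1 / 2) * Real.logb 2
            ((η * μ + (1 - η) * γ) /
              ((η * μ + (1 - η) * γ) - g * η * (μ ^ 2 - 1) / (g * μ + (g - 1) * ω)))
          - (1 / 2) * Real.logb 2 (g * η * μ / (g * γ * (1 - η) + η * ω * (g - 1))))
      Filter.atTop (nhds 0) := by
  obtain ⟨hη0, hη1⟩ := hη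
  have h1η : (0:ℝ) ≤ 1 - η := by linarith
  set D : ℝ := g * γ * (1 - η) + η * ω * (g - 1) with hDdef
  set C : ℝ := (1 - η) * γ * (g - 1) * ω + g * η with hCdef
  have hDpos : 0 < D := by
    have h1 : 0 ≤ g * γ * (1 - η) := by positivity
    have h2 : 0 < η * ω * (g - 1) :=
      mul_pos (mul_pos hη0 (by linarith)) (by linarith)
    linarith
  have hCpos : 0 < C := by
    have h1 : 0 ≤ (1 - η) * γ * (g - 1) * ω :=
      mul_nonneg (mul_nonneg (mul_nonneg h1η (by linarith)) (by linarith)) (by linarith)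
    have h2 : 0 < g * η := mul_pos (by linarith) hη0
    linarith
  have hgη : 0 < g * η := mul_pos (by linarith) hη0
  set S : ℝ → ℝ := fun μ =>
    ((η + (1 - η) * γ / μ) * (g + (g - 1) * ω / μ) * D) / ((D + C / μ) * (g * η)) with hSdef
  have hS : Tendsto S atTop (nhds 1) := by
    have hz : ∀ c : ℝ, Tendsto (fun μ : ℝ => c / μ) atTop (nhds 0) :=
      fun c => tendsto_const_nhds.div_atTop tendsto_id
    have hc : ∀ c : ℝ, Tendsto (fun _ : ℝ => c) atTop (nhds c) := fun c => tendsto_const_nhds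
    have hnum : Tendsto (fun μ : ℝ => (η + (1 - η) * γ / μ) * (g + (g - 1) * ω / μ) * D)
        atTop (nhds (η * g * D)) := by
      have := (((hc η).add (hz ((1 - η) * γ))).mul ((hc g).add (hz ((g - 1) * ω)))).mul (hc D)
      simpa using this
    have hden : Tendsto (fun μ : ℝ => (D + C / μ) * (g * η)) atTop (nhds (D * (g * η))) := by
      have := ((hc D).add (hz C)).mul (hc (g * η))
      simpa using this
    have hq := hnum.div hden (by positivity)
    have heq : η * g * D / (D * (g * η)) = 1 := by
      field_simp
    rwa [heq] at hq
  have hlog : Tendsto (fun μ : ℝ => (1 / 2) * Real.logb 2 (S μ)) atTop (nhds 0) := by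
    have h1 : Tendsto (fun μ : ℝ => Real.log (S μ)) atTop (nhds 0) := by
      have := (Real.continuousAt_log (by norm_num : (1:ℝ) ≠ 0)).tendsto.comp hS
      simpa [Function.comp_def] using this
    have h2 : Tendsto (fun μ : ℝ => (1 / 2) * (Real.log (S μ) / Real.log 2)) atTop (nhds 0) := by
      have := (h1.div_const (Real.log 2)).const_mul (1/2 : ℝ)
      simpa using this
    simpa [Real.logb] using h2
  refine Tendsto.congr' ?_ hlog
  filter_upwards [eventually_ge_atTop (1 : ℝ)] with μ hμ
  have hμ0 : 0 < μ := lt_of_lt_of_le one_pos hμ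
  have hP : 0 < g * μ + (g - 1) * ω := by nlinarith
  have hVA : 0 < η * μ + (1 - η) * γ := by nlinarith
  have hQ : 0 < μ * D + C := by positivity
  -- the key algebraic identity for the conditional variance
  have hVAB : (η * μ + (1 - η) * γ) - g * η * (μ ^ 2 - 1) / (g * μ + (g - 1) * ω)
      = (μ * D + C) / (g * μ + (g - 1) * ω) := by
    rw [hDdef, hCdef]
    rw [eq_div_iff hP.ne', sub_mul, div_mul_cancel₀ _ hP.ne']
    ring
  -- rewrite S μ
  have hSval : S μ = ((η * μ + (1 - η) * γ) / ((μ * D + C) / (g * μ + (g - 1) * ω)))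
      / (g * η * μ / D) := by
    rw [hSdef]
    field_simp
  rw [hSval, Real.logb_div (by positivity) (by positivity), hVAB]
  ring
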